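/- Let (D=(V∪R,A), M) be a matroid-rooted digraph, {B_r}_{r∈R} a matroid-reachability-based packing of arborescences in (D,M), and X⊆V∪R with X∩V≠∅. Then d_A^-(X) ≥ r_M(P_X^D∩R) − r_M(X∩R). -/

import Mathlib

open Set

/-- One step along an arc of `B` in the digraph given by tail/head maps. -/
def stepOn {α β : Type} (tl hd : β → α) (B : Set β) (u v : α) : Prop :=
  ∃ a ∈ B, tl a = u ∧ hd a = v

/-- Reachability using only arcs of `B`. -/
def reachOn {α β : Type} (tl hd : β → α) (B : Set β) (u v : α) : Prop :=
  Relation.ReflTransGen (stepOn tl hd B) u v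

/-- The vertex set of the arc set `B` together with the root `r`. -/
def vertsOf {α β : Type} (tl hd : β → α) (B : Set β) (r : α) : Set α :=
  insert r (tl '' B ∪ hd '' B)

/-- `B` is an `r`-arborescence: no arc enters the root, every other vertex of `B`
has exactly one entering arc, and every vertex of `B` is reachable from `r` in `B`. -/
noncomputable def IsArbor {α β : Type} (tl hd : β → α) (B : Set β) (r : α) : Prop :=
  (∀ a ∈ B, hd a ≠ r) ∧
  (∀ v ∈ vertsOf tl hd B r, v ≠ r → {a ∈ B | hd a = v}.ncard = 1) ∧
  (∀ v ∈ vertsOf tl hd B r, reachOn tl hd B r v)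

/-- Number of arcs entering the vertex set `X`. -/
noncomputable def dIn {α β : Type} (tl hd : β → α) (X : Set α) : ℕ :=
  {a : β | hd a ∈ X ∧ tl a ∉ X}.ncard


/-- Reachability in the whole digraph. -/
def reaches {α β : Type} (tl hd : β → α) (u v : α) : Prop :=
  reachOn tl hd Set.univ u v

/-- `P_X^D`: the set of vertices from which some vertex of `X` is reachable. -/
def Pset {α β : Type} (tl hd : β → α) (X : Set α) : Set α :=
  {v | ∃ x ∈ X, reaches tl hd v x}

/-- A matroid given by its rank function. -/
structure RankFn (α : Type) where
  rk : Set α → ℕ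
  rk_empty : rk ∅ = 0
  subcard : ∀ X : Set α, X.Finite → rk X ≤ X.ncard
  mono : ∀ X Y : Set α, X ⊆ Y → rk X ≤ rk Y
  submod : ∀ X Y : Set α, rk (X ∪ Y) + rk (X ∩ Y) ≤ rk X + rk Y
  unit : ∀ (X : Set α) (y : α), rk (insert y X) ≤ rk X + 1

/-- `B` is a basis of `X` in the matroid `M`. -/
def IsBasisOf {α : Type} (M : RankFn α) (B X : Set α) : Prop :=
  B ⊆ X ∧ B.ncard = M.rk B ∧ M.rk B = M.rk X

lemma reachOn_crossing {α β : Type} (tl hd : β → α) (Bs : Set β) (X : Set α) {u v : α}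
    (h : reachOn tl hd Bs u v) (hu : u ∉ X) :
    v ∈ X → ∃ a ∈ Bs, hd a ∈ X ∧ tl a ∉ X := by
  induction h with
  | refl => exact fun hv => absurd hv hu
  | @tail b c hab hbc ih =>
    intro hc
    by_cases hb : b ∈ X
    · exact ih hb
    · obtain ⟨a, haB, hta, hha⟩ := hbc
      exact ⟨a, haB, by rw [hha]; exact hc, by rw [hta]; exact hb⟩

lemma reach_into_R {α β : Type} (tl hd : β → α) {R : Set α}
    (hroot : ∀ a : β, hd a ∉ R) {u v : α}
    (h : reachOn tl hd Set.univ u v) : v ∈ R → u = v := by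
  induction h with
  | refl => exact fun _ => rfl
  | @tail b c hab hbc ih =>
    intro hc
    obtain ⟨a, _, _, hha⟩ := hbc
    exact absurd (show hd a ∈ R by rw [hha]; exact hc) (hroot a)

lemma rk_union_le {α : Type} (M : RankFn α) (S : Set α) {T : Set α} (hT : T.Finite) :
    M.rk (S ∪ T) ≤ M.rk S + T.ncard := by
  refine Set.Finite.induction_on (motive := fun T _ => M.rk (S ∪ T) ≤ M.rk S + T.ncard) T hT (by simp) ?_
  intro a T ha hTf ih
  have h1 : M.rk (S ∪ insert a T) ≤ M.rk (S ∪ T) + 1 := by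
    rw [Set.union_insert]; exact M.unit _ a
  have h2 : (insert a T).ncard = T.ncard + 1 := Set.ncard_insert_of_notMem ha hTf
  omega

lemma rk_union_span {α : Type} (M : RankFn α) (S : Set α) {Y : Set α} (hY : Y.Finite)
    (h : ∀ y ∈ Y, M.rk (insert y S) = M.rk S) : M.rk (S ∪ Y) = M.rk S := by
  refine Set.Finite.induction_on_subset (motive := fun Y _ => M.rk (S ∪ Y) = M.rk S) Y hY (by simp) ?_
  intro a Y' haY hsubY haY' ih
  have hS : M.rk (S ∪ Y') = M.rk S := ih
  have ha' : M.rk (insert a S) = M.rk S := h a haY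
  have hsub := M.submod (S ∪ Y') (insert a S)
  have e1 : (S ∪ Y') ∪ insert a S = insert a (S ∪ Y') := by
    ext z
    simp only [Set.mem_union, Set.mem_insert_iff]
    tauto
  have e2 : M.rk S ≤ M.rk ((S ∪ Y') ∩ insert a S) :=
    M.mono _ _ (Set.subset_inter Set.subset_union_left (Set.subset_insert _ _))
  rw [e1] at hsub
  have e3 : S ∪ insert a Y' = insert a (S ∪ Y') := Set.union_insert
  rw [e3]
  have e4 : M.rk (S ∪ Y') ≤ M.rk (insert a (S ∪ Y')) := M.mono _ _ (Set.subset_insert _ _)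
  omega

/-- Necessity direction of Király's theorem. -/
theorem matroid_reachability_necessity
    {α β : Type} [Fintype α] [Fintype β]
    (V R : Set α) (tl hd : β → α)
    (hpart : V ∪ R = Set.univ) (hdisj : Disjoint V R)
    (hroot : ∀ a : β, hd a ∉ R)
    (M : RankFn α)
    (B : α → Set β)
    (hdisjB : ∀ r ∈ R, ∀ r' ∈ R, r ≠ r' → Disjoint (B r) (B r'))
    (harb : ∀ r ∈ R, IsArbor tl hd (B r) r)
    (hbasis : ∀ v ∈ V, IsBasisOf M {r ∈ R | v ∈ vertsOf tl hd (B r) r}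
      (Pset tl hd {v} ∩ R))
    (X : Set α) (hX : (X ∩ V).Nonempty) :
    (dIn tl hd X : ℤ) ≥ (M.rk (Pset tl hd X ∩ R) : ℤ) - (M.rk (X ∩ R) : ℤ) := by
  classical
  set T : Set α := {r | r ∈ R ∧ r ∉ X ∧ ∃ a ∈ B r, hd a ∈ X ∧ tl a ∉ X} with hTdef
  set S : Set α := (X ∩ R) ∪ T with hSdef
  -- Step A : T.ncard ≤ dIn tl hd X
  have hTd : T.ncard ≤ dIn tl hd X := by
    rcases T.eq_empty_or_nonempty with hT | hT
    · simp [hT]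
    · obtain ⟨r0, hr0⟩ := hT
      obtain ⟨a0, -⟩ := hr0.2.2
      haveI : Nonempty β := ⟨a0⟩
      set f : α → β := fun r =>
        if h : ∃ a, a ∈ B r ∧ hd a ∈ X ∧ tl a ∉ X then h.choose else Classical.arbitrary β
        with hfdef
      have hf : ∀ r ∈ T, f r ∈ B r ∧ hd (f r) ∈ X ∧ tl (f r) ∉ X := by
        intro r hr
        have hex : ∃ a, a ∈ B r ∧ hd a ∈ X ∧ tl a ∉ X := by
          obtain ⟨a, ha, h1, h2⟩ := hr.2.2
          exact ⟨a, ha, h1, h2⟩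
        simp only [hfdef, dif_pos hex]
        exact hex.choose_spec
      show T.ncard ≤ {a : β | hd a ∈ X ∧ tl a ∉ X}.ncard
      apply Set.ncard_le_ncard_of_injOn f
      · exact fun r hr => ⟨(hf r hr).2.1, (hf r hr).2.2⟩
      · intro r hr r' hr' heq
        by_contra hne
        have hdis := hdisjB r hr.1 r' hr'.1 hne
        have h1 : f r ∉ B r' := Set.disjoint_left.mp hdis (hf r hr).1
        exact h1 (by rw [heq]; exact (hf r' hr').1)
  -- Step B : every element of Pset X ∩ R is spanned by S
  have hspan : ∀ y ∈ Pset tl hd X ∩ R, M.rk (insert y S) = M.rk S := by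
    intro y hy
    obtain ⟨⟨x, hxX, hxr⟩, hyR⟩ := hy
    have hx' : x ∈ V ∪ R := by rw [hpart]; trivial
    rcases hx' with hxV | hxR
    · -- x ∈ V : use the basis at x
      obtain ⟨hFsub, -, hFrk⟩ := hbasis x hxV
      set F : Set α := {r ∈ R | x ∈ vertsOf tl hd (B r) r} with hFdef
      have hyP : y ∈ Pset tl hd {x} ∩ R := ⟨⟨x, rfl, hxr⟩, hyR⟩
      have hFy : M.rk (insert y F) = M.rk F := by
        apply le_antisymm
        · calc M.rk (insert y F) ≤ M.rk (Pset tl hd {x} ∩ R) :=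
                M.mono _ _ (Set.insert_subset hyP hFsub)
            _ = M.rk F := hFrk.symm
        · exact M.mono _ _ (Set.subset_insert _ _)
      have hFS : F ⊆ S := by
        intro r hr
        obtain ⟨hrR, hrv⟩ := hr
        by_cases hrX : r ∈ X
        · exact Or.inl ⟨hrX, hrR⟩
        · have hreach : reachOn tl hd (B r) r x := (harb r hrR).2.2 x hrv
          exact Or.inr ⟨hrR, hrX, reachOn_crossing tl hd (B r) X hreach hrX hxX⟩
      have hsub := M.submod S (insert y F)
      have e1 : S ∪ insert y F = insert y S := by
        ext z
        simp only [Set.mem_union, Set.mem_insert_iff]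
        constructor
        · rintro (h | h | h)
          · exact Or.inr h
          · exact Or.inl h
          · exact Or.inr (hFS h)
        · rintro (h | h)
          · exact Or.inr (Or.inl h)
          · exact Or.inl h
      have e2 : M.rk F ≤ M.rk (S ∩ insert y F) :=
        M.mono _ _ (Set.subset_inter hFS (Set.subset_insert _ _))
      rw [e1] at hsub
      have e4 : M.rk S ≤ M.rk (insert y S) := M.mono _ _ (Set.subset_insert _ _)
      omega
    · -- x ∈ R : then y = x ∈ X ∩ R ⊆ S
      have hyx : y = x := reach_into_R tl hd hroot hxr hxR
      have hyS : y ∈ S := Or.inl ⟨by rw [hyx]; exact hxX, hyR⟩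
      rw [Set.insert_eq_self.mpr hyS]
  have h1 : M.rk (Pset tl hd X ∩ R) ≤ M.rk S := by
    calc M.rk (Pset tl hd X ∩ R) ≤ M.rk (S ∪ (Pset tl hd X ∩ R)) :=
          M.mono _ _ Set.subset_union_right
      _ = M.rk S := rk_union_span M S (Set.toFinite _) hspan
  have h2 : M.rk S ≤ M.rk (X ∩ R) + T.ncard := rk_union_le M (X ∩ R) (Set.toFinite T)
  omega
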